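/- For every finite simple graph G and every two vertices u, v lying in the same connected component of G, the shortest-path distance satisfies d(u,v) ≤ 2^{td(G)+1} − 2; in particular the diameter of G is at most 2^{td(G)+1} − 2. -/

import Mathlib

/-- The subgraph of `G` induced on the finite vertex set `A` (kept on the same vertex type:
vertices outside `A` are isolated). -/
def onSet {V : Type*} (G : SimpleGraph V) (A : Finset V) : SimpleGraph V where
  Adj x y := x ∈ A ∧ y ∈ A ∧ G.Adj x y
  symm := ⟨fun _ _ ⟨hx, hy, h⟩ => ⟨hy, hx, h.symm⟩⟩
  loopless := ⟨fun x ⟨_, _, h⟩ => G.irrefl h⟩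

/-- The subgraph of `G` induced on `A` is connected (with `A` nonempty). -/
def connOn {V : Type*} (G : SimpleGraph V) (A : Finset V) : Prop :=
  A.Nonempty ∧ ∀ x ∈ A, ∀ y ∈ A, (onSet G A).Reachable x y

open Classical in
/-- Tree-depth of the subgraph of `G` induced on `A`, computed with fuel (any fuel `≥ A.card`
gives the correct value, since every recursive call strictly decreases the cardinality of the
vertex set): a graph with at most one vertex has tree-depth `0`; a connected graph with at
least two vertices has tree-depth `1 + min_{u} td(G − u)`; a disconnected graph has tree-depth
the maximum of the tree-depths of its connected components. -/
noncomputable def tdAux {V : Type*} (G : SimpleGraph V) : ℕ → Finset V → ℕ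
  | 0, _ => 0
  | m + 1, A =>
    if h1 : A.card ≤ 1 then 0
    else if connOn G A then
      1 + A.inf' (Finset.card_pos.mp (by omega)) fun u => tdAux G m (A.erase u)
    else
      A.sup fun v => tdAux G m (A.filter fun u => (onSet G A).Reachable v u)

/-- The tree-depth of a finite graph `G` (with the convention that a one-vertex graph has
tree-depth `0`). -/
noncomputable def treeDepth {V : Type*} [Fintype V] (G : SimpleGraph V) : ℕ :=
  tdAux G (Fintype.card V) Finset.univ

section Aux

variable {V : Type*} {G : SimpleGraph V}

lemma onSet_mono {A B : Finset V} (h : A ⊆ B) : onSet G A ≤ onSet G B :=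
  fun _ _ ⟨hx, hy, hadj⟩ => ⟨h hx, h hy, hadj⟩

lemma dist_le_of_le {H K : SimpleGraph V} (hle : H ≤ K) {x y : V} (h : H.Reachable x y) :
    K.dist x y ≤ H.dist x y := by
  obtain ⟨p, hp⟩ := h.exists_walk_length_eq_dist
  calc K.dist x y ≤ (p.map (SimpleGraph.Hom.ofLE hle)).length :=
        SimpleGraph.dist_le _
    _ = p.length := SimpleGraph.Walk.length_map _ _
    _ = H.dist x y := hp

lemma reachable_trans_dist {H : SimpleGraph V} {x y z : V} (h1 : H.Reachable x y)
    (h2 : H.Reachable y z) : H.dist x z ≤ H.dist x y + H.dist y z := by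
  obtain ⟨p, hp⟩ := h1.exists_walk_length_eq_dist
  obtain ⟨q, hq⟩ := h2.exists_walk_length_eq_dist
  rw [← hp, ← hq, ← SimpleGraph.Walk.length_append]
  apply SimpleGraph.dist_le

lemma start_mem {A : Finset V} {x y : V} (p : (onSet G A).Walk x y) (hne : x ≠ y) :
    x ∈ A := by
  cases p with
  | nil => exact absurd rfl hne
  | cons h q => exact h.1

lemma mem_of_reachable {A : Finset V} {x y : V} (h : (onSet G A).Reachable x y)
    (hne : x ≠ y) : x ∈ A ∧ y ∈ A := by
  obtain ⟨p⟩ := h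
  exact ⟨start_mem p hne, start_mem p.reverse hne.symm⟩

open Classical in
/-- From a walk ending at `u0` and starting at `x ≠ u0`, extract a neighbor `w` of `u0`
reachable from `x` avoiding `u0`. -/
lemma extract_neighbor {A : Finset V} {u0 : V} :
    ∀ {x : V}, (onSet G A).Walk x u0 → x ≠ u0 →
      ∃ w, (onSet G A).Adj w u0 ∧ (onSet G (A.erase u0)).Reachable x w := by
  intro x p
  induction p with
  | nil => intro h; exact absurd rfl h
  | @cons a b c h q ih =>
    intro hne
    by_cases hb : b = c
    · subst hb; exact ⟨a, h, SimpleGraph.Reachable.refl a⟩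
    · obtain ⟨w, hw1, hw2⟩ := ih hb
      refine ⟨w, hw1, SimpleGraph.Reachable.trans ?_ hw2⟩
      exact SimpleGraph.Adj.reachable
        ⟨Finset.mem_erase.mpr ⟨hne, h.1⟩, Finset.mem_erase.mpr ⟨hb, h.2.1⟩, h.2.2⟩

open Classical in
/-- A walk in `onSet G A` starting at a vertex reachable from `u` stays in the set of
vertices reachable from `u`. -/
lemma walk_in_component {A : Finset V} {u : V} :
    ∀ {x y : V}, (onSet G A).Walk x y → (onSet G A).Reachable u x →
      (onSet G (A.filter fun w => (onSet G A).Reachable u w)).Reachable x y := by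
  intro x y p
  induction p with
  | nil => intro _; exact SimpleGraph.Reachable.refl _
  | @cons a b c h q ih =>
    intro hua
    have hub : (onSet G A).Reachable u b := hua.trans h.reachable
    refine SimpleGraph.Reachable.trans (SimpleGraph.Adj.reachable ?_) (ih hub)
    exact ⟨Finset.mem_filter.mpr ⟨h.1, hua⟩, Finset.mem_filter.mpr ⟨h.2.1, hub⟩, h.2.2⟩

open Classical in
lemma key (G : SimpleGraph V) : ∀ (m : ℕ) (A : Finset V), A.card ≤ m → ∀ u v : V,
    (onSet G A).Reachable u v → (onSet G A).dist u v ≤ 2 ^ (tdAux G m A + 1) - 2 := by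
  intro m
  induction m with
  | zero =>
    intro A hA u v huv
    by_cases h : u = v
    · simp [h, SimpleGraph.dist_self]
    · obtain ⟨hu, _⟩ := mem_of_reachable huv h
      simp [Finset.card_eq_zero.mp (Nat.le_zero.mp hA)] at hu
  | succ m ih =>
    intro A hA u v huv
    by_cases hne : u = v
    · simp [hne, SimpleGraph.dist_self]
    obtain ⟨hu, hv⟩ := mem_of_reachable huv hne
    rw [tdAux]
    by_cases h1 : A.card ≤ 1
    · exact absurd (Finset.one_lt_card.mpr ⟨u, hu, v, hv, hne⟩) (by omega)
    rw [dif_neg h1]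
    by_cases hc : connOn G A
    · rw [if_pos hc]
      have hpos : 0 < A.card := by omega
      obtain ⟨u0, hu0A, hu0⟩ := Finset.exists_mem_eq_inf' (Finset.card_pos.mp hpos)
        (fun w => tdAux G m (A.erase w))
      set t := A.inf' (Finset.card_pos.mp hpos) (fun w => tdAux G m (A.erase w)) with ht
      have hdist : ∀ x ∈ A, (onSet G A).dist x u0 ≤ 2 ^ (t + 1) - 1 := by
        intro x hx
        by_cases hxu : x = u0
        · simp [hxu, SimpleGraph.dist_self]
        obtain ⟨p⟩ := hc.2 x hx u0 hu0A
        obtain ⟨w, hw1, hw2⟩ := extract_neighbor p hxu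
        have hcard : (A.erase u0).card ≤ m := by
          have := Finset.card_erase_of_mem hu0A; omega
        have hIH := ih (A.erase u0) hcard x w hw2
        rw [← hu0] at hIH
        have hxw : (onSet G A).dist x w ≤ 2 ^ (t + 1) - 2 :=
          le_trans (dist_le_of_le (onSet_mono (Finset.erase_subset u0 A)) hw2) hIH
        have hwu0 : (onSet G A).dist w u0 ≤ 1 := by
          calc (onSet G A).dist w u0 ≤ (SimpleGraph.Walk.cons hw1 SimpleGraph.Walk.nil).length :=
                SimpleGraph.dist_le _
            _ = 1 := rfl
        have htri : (onSet G A).dist x u0 ≤ (onSet G A).dist x w + (onSet G A).dist w u0 :=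
          reachable_trans_dist
            (hw2.mono (onSet_mono (Finset.erase_subset u0 A))) hw1.reachable
        have h2 : 1 ≤ 2 ^ (t + 1) := Nat.one_le_two_pow
        omega
      have htri : (onSet G A).dist u v ≤ (onSet G A).dist u u0 + (onSet G A).dist u0 v :=
        reachable_trans_dist (hc.2 u hu u0 hu0A) (hc.2 u0 hu0A v hv)
      have h1' := hdist u hu
      have h2' := hdist v hv
      rw [SimpleGraph.dist_comm] at h2'
      have hpow : 2 ^ (1 + t + 1) = 2 ^ (t + 1) + 2 ^ (t + 1) := by ring
      have h2 : 1 ≤ 2 ^ (t + 1) := Nat.one_le_two_pow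
      omega
    · rw [if_neg hc]
      set B := A.filter (fun w => (onSet G A).Reachable u w) with hB
      have hBsub : B ⊆ A := Finset.filter_subset _ _
      have hBne : B ≠ A := by
        intro hEq
        apply hc
        refine ⟨⟨u, hu⟩, fun x hx y hy => ?_⟩
        have hx' : (onSet G A).Reachable u x := by
          have := hEq ▸ hx; exact (Finset.mem_filter.mp this).2
        have hy' : (onSet G A).Reachable u y := by
          have := hEq ▸ hy; exact (Finset.mem_filter.mp this).2
        exact hx'.symm.trans hy'
      have hBcard : B.card ≤ m := by
        have hlt : B.card < A.card := Finset.card_lt_card (lt_of_le_of_ne hBsub hBne)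
        omega
      obtain ⟨p⟩ := huv
      have hreach : (onSet G B).Reachable u v :=
        walk_in_component p (SimpleGraph.Reachable.refl u)
      have hIH := ih B hBcard u v hreach
      have hmono : (onSet G A).dist u v ≤ (onSet G B).dist u v :=
        dist_le_of_le (onSet_mono hBsub) hreach
      have hle : tdAux G m B ≤ A.sup fun w => tdAux G m
          (A.filter fun x => (onSet G A).Reachable w x) :=
        Finset.le_sup (f := fun w => tdAux G m (A.filter fun x => (onSet G A).Reachable w x)) hu
      calc (onSet G A).dist u v ≤ (onSet G B).dist u v := hmono
        _ ≤ 2 ^ (tdAux G m B + 1) - 2 := hIH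
        _ ≤ 2 ^ ((A.sup fun w => tdAux G m
              (A.filter fun x => (onSet G A).Reachable w x)) + 1) - 2 :=
          Nat.sub_le_sub_right (Nat.pow_le_pow_right (by norm_num) (by omega)) 2

lemma onSet_univ [Fintype V] (G : SimpleGraph V) : onSet G Finset.univ = G := by
  ext x y
  simp [onSet]

end Aux

/-- Any two vertices in the same connected component of `G` are at shortest-path distance at
most `2^{td(G)+1} − 2`; in particular the diameter of `G` is at most `2^{td(G)+1} − 2`. -/
theorem stmt9 {V : Type*} [Fintype V] (G : SimpleGraph V) (u v : V) (h : G.Reachable u v) :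
    G.dist u v ≤ 2 ^ (treeDepth G + 1) - 2 := by
  have := key G (Fintype.card V) Finset.univ (by simp) u v (by rwa [onSet_univ])
  rwa [onSet_univ] at this
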